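/- The 2n − 3 distortion bound for Two-Extremes is tight: place candidates on the real line at y_1 = −2, y_2 = 0, y_3 = 2, let n ≥ 2 voters be located at x_1 = −1, x_2 = … = x_{n−1} = 0, x_n = 2, and let the action profile be a_1 = 1, a_2 = … = a_{n−1} = 2, a_n = 3. This location profile is consistent with the action profile (x_1 = −1 is equidistant from y_1 and y_2), Two-Extremes outputs the pair (y_1, y_3), SC((y_1, y_3), x) = 2n − 3, and OPT(x) = 1, so the achieved ratio equals 2n − 3. -/

import Mathlib

open Finset

/-- Cost of a point `z` when the pair of candidates `(y k, y l)` is elected: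
the distance to the closer of the two winners. -/
noncomputable def pairCost {α : Type*} [PseudoMetricSpace α] {m : ℕ}
    (y : Fin m → α) (k l : Fin m) (z : α) : ℝ :=
  min (dist z (y k)) (dist z (y l))

/-- Social cost of the pair `(y k, y l)` on the location profile `x`. -/
noncomputable def socialCost {α : Type*} [PseudoMetricSpace α] {m n : ℕ}
    (y : Fin m → α) (k l : Fin m) (x : Fin n → α) : ℝ :=
  ∑ i, pairCost y k l (x i)

/-- Optimal social cost over all pairs of distinct candidates. -/
noncomputable def OPT {α : Type*} [PseudoMetricSpace α] {m n : ℕ}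
    (y : Fin m → α) (x : Fin n → α) : ℝ :=
  sInf {c : ℝ | ∃ k l : Fin m, k ≠ l ∧ c = socialCost y k l x}

/-- A location profile `x` is consistent with an action profile `a` if every
voter votes for (one of) her nearest candidate(s). -/
def Consistent {α : Type*} [PseudoMetricSpace α] {m n : ℕ}
    (y : Fin m → α) (a : Fin n → Fin m) (x : Fin n → α) : Prop :=
  ∀ (i : Fin n) (k : Fin m), dist (x i) (y (a i)) ≤ dist (x i) (y k)

/-- The Two-Extremes mechanism on the real line: if at least two distinct
candidates receive votes, output the leftmost and the rightmost candidates
receiving a vote (candidates are indexed in increasing order of location);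
if all voters vote for the single candidate `i`, output `(0, i)` when `i ≠ 0`
and `(0, 1)` when `i = 0`. -/
noncomputable def twoExtremes {n m : ℕ} (hm : 2 ≤ m) (a : Fin n → Fin m) :
    Fin m × Fin m :=
  if h : ∃ j j' : Fin n, a j ≠ a j' then
    ((univ.image a).min' ⟨a h.choose, mem_image_of_mem a (mem_univ h.choose)⟩,
     (univ.image a).max' ⟨a h.choose, mem_image_of_mem a (mem_univ h.choose)⟩)
  else if h' : ∃ j : Fin n, a j ≠ ⟨0, by omega⟩ then
    (⟨0, by omega⟩, a h'.choose)
  else (⟨0, by omega⟩, ⟨1, by omega⟩)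

/-- Tightness of the `2n - 3` bound for Two-Extremes: candidates at `-2, 0, 2`,
voters at `-1, 0, ..., 0, 2` voting for candidates `0, 1, ..., 1, 2`. The
profile is consistent, Two-Extremes outputs the pair `(0, 2)`, the achieved
social cost is `2n - 3` and the optimum is `1`. -/
theorem stmt6 (n : ℕ) (hn : 2 ≤ n) (y : Fin 3 → ℝ) (hy : y = ![-2, 0, 2])
    (x : Fin n → ℝ)
    (hx : ∀ i : Fin n,
      x i = if (i : ℕ) = 0 then -1 else if (i : ℕ) = n - 1 then 2 else 0)
    (a : Fin n → Fin 3)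
    (ha : ∀ i : Fin n,
      a i = if (i : ℕ) = 0 then 0 else if (i : ℕ) = n - 1 then 2 else 1) :
    Consistent y a x ∧
      twoExtremes (show 2 ≤ 3 by norm_num) a = ((0 : Fin 3), (2 : Fin 3)) ∧
      socialCost y 0 2 x = 2 * (n : ℝ) - 3 ∧
      OPT y x = 1 := by
  subst hy
  have hnm : (0:ℕ) ≠ n - 1 := by omega
  -- special indices
  set i0 : Fin n := ⟨0, by omega⟩ with hi0
  set iN : Fin n := ⟨n - 1, by omega⟩ with hiN
  have hxi0 : x i0 = -1 := by rw [hx]; simp [hi0]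
  have hxiN : x iN = 2 := by rw [hx]; simp [hiN, hnm.symm]
  have hai0 : a i0 = 0 := by rw [ha]; simp [hi0]
  have haiN : a iN = 2 := by rw [ha]; simp [hiN, hnm.symm]
  -- indicator sums
  have eind : ∀ (k : ℕ), k < n → ∀ (c : ℝ),
      (∑ i : Fin n, (if (i : ℕ) = k then c else 0)) = c := by
    intro k hk c
    rw [Finset.sum_eq_single (⟨k, hk⟩ : Fin n)]
    · simp
    · intro b _ hb
      rw [if_neg]
      simpa [Fin.ext_iff] using hb
    · simp
  -- consistency
  have hcons : Consistent ![-2, 0, 2] a x := by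
    intro i k
    rw [ha i, hx i]
    by_cases h1 : (i : ℕ) = 0
    · simp only [if_pos h1]
      fin_cases k <;> norm_num [Real.dist_eq]
    · by_cases h2 : (i : ℕ) = n - 1
      · simp only [if_neg h1, if_pos h2]
        fin_cases k <;> norm_num [Real.dist_eq, Matrix.cons_val_two]
      · simp only [if_neg h1, if_neg h2]
        fin_cases k <;> norm_num [Real.dist_eq]
  refine ⟨hcons, ?_, ?_, ?_⟩
  · -- two extremes
    have h : ∃ j j' : Fin n, a j ≠ a j' := by
      refine ⟨i0, iN, ?_⟩
      rw [hai0, haiN]; decide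
    rw [twoExtremes, dif_pos h]
    have h0mem : (0 : Fin 3) ∈ univ.image a := by
      rw [← hai0]; exact mem_image_of_mem a (mem_univ _)
    have h2mem : (2 : Fin 3) ∈ univ.image a := by
      rw [← haiN]; exact mem_image_of_mem a (mem_univ _)
    have hne : (univ.image a).Nonempty := ⟨0, h0mem⟩
    refine Prod.ext ?_ ?_
    · exact le_antisymm (min'_le _ _ h0mem) (Fin.zero_le _)
    · refine le_antisymm ?_ (le_max' _ _ h2mem)
      refine max'_le _ hne _ (fun z _ => ?_)
      have : z ≤ Fin.last 2 := Fin.le_last z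
      simpa using this
  · -- social cost of (0, 2)
    have key : ∀ i : Fin n, pairCost ![-2, 0, 2] 0 2 (x i)
        = 2 - (if (i : ℕ) = 0 then 1 else 0) - (if (i : ℕ) = n - 1 then 2 else 0) := by
      intro i
      rw [hx i]
      by_cases h1 : (i : ℕ) = 0
      · have h2 : (i : ℕ) ≠ n - 1 := by omega
        simp only [if_pos h1, if_neg h2]
        norm_num [pairCost, Real.dist_eq, Matrix.cons_val_two]
      · by_cases h2 : (i : ℕ) = n - 1
        · simp only [if_neg h1, if_pos h2]
          norm_num [pairCost, Real.dist_eq, Matrix.cons_val_two]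
        · simp only [if_neg h1, if_neg h2]
          norm_num [pairCost, Real.dist_eq, Matrix.cons_val_two]
    rw [socialCost]
    rw [Finset.sum_congr rfl (fun i _ => key i)]
    rw [Finset.sum_sub_distrib, Finset.sum_sub_distrib, Finset.sum_const,
      eind 0 (by omega), eind (n-1) (by omega)]
    simp [card_univ]
    ring
  · -- OPT
    have lb : ∀ c ∈ {c : ℝ | ∃ k l : Fin 3, k ≠ l ∧ c = socialCost ![-2, 0, 2] k l x},
        (1 : ℝ) ≤ c := by
      rintro c ⟨k, l, hkl, rfl⟩
      have h0 : (1 : ℝ) ≤ pairCost ![-2, 0, 2] k l (x i0) := by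
        rw [hxi0]
        fin_cases k <;> fin_cases l <;> norm_num [pairCost, Real.dist_eq]
      calc (1 : ℝ) ≤ pairCost ![-2, 0, 2] k l (x i0) := h0
        _ ≤ ∑ i, pairCost ![-2, 0, 2] k l (x i) :=
            Finset.single_le_sum
              (fun i _ => le_min dist_nonneg dist_nonneg) (mem_univ i0)
        _ = socialCost ![-2, 0, 2] k l x := rfl
    have hmem : (1 : ℝ) ∈ {c : ℝ | ∃ k l : Fin 3, k ≠ l ∧ c = socialCost ![-2, 0, 2] k l x} := by
      refine ⟨1, 2, by decide, ?_⟩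
      have key : ∀ i : Fin n, pairCost ![-2, 0, 2] 1 2 (x i)
          = (if (i : ℕ) = 0 then 1 else 0) := by
        intro i
        rw [hx i]
        by_cases h1 : (i : ℕ) = 0
        · have h2 : (i : ℕ) ≠ n - 1 := by omega
          simp only [if_pos h1, if_neg h2]
          norm_num [pairCost, Real.dist_eq, Matrix.cons_val_two]
        · by_cases h2 : (i : ℕ) = n - 1
          · simp only [if_neg h1, if_pos h2]
            norm_num [pairCost, Real.dist_eq, Matrix.cons_val_two]
          · simp only [if_neg h1, if_neg h2]
            norm_num [pairCost, Real.dist_eq]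
      rw [socialCost, Finset.sum_congr rfl (fun i _ => key i), eind 0 (by omega)]
    rw [OPT]
    exact le_antisymm (csInf_le ⟨1, lb⟩ hmem) (le_csInf ⟨1, hmem⟩ lb)
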